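/- Let $(\Delta_k)_{k=0}^{K}$ be a sequence of positive reals, $\mathcal{S} \subseteq \{0,\ldots,K\}$, and constants $0 < \gamma < 1 < \Gamma$ such that $\Delta_{k+1} \le \Gamma \Delta_k$ for $k \in \mathcal{S}$ and $\Delta_{k+1} \le \gamma\Delta_k$ for $k \notin \mathcal{S}$ (for $k < K$). Then for any $\Delta \le \Delta_0$, the number of indices $k \in \{0,\ldots,K\}\setminus\mathcal{S}$ with $\Delta_k \ge \gamma^{-1}\Delta$ is at most $\frac{\log(\Gamma)}{\log(1/\gamma)} \cdot \#\{k \in \mathcal{S} : \Delta_k \ge \Gamma^{-1}\Delta\} + \frac{\log(\Delta_0/\Delta)}{\log(1/\gamma)}$. -/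

import Mathlib

theorem stmt12 (K : ℕ) (Δk : ℕ → ℝ) (hpos : ∀ k ≤ K, 0 < Δk k)
    (S : Finset ℕ) (γ Γ : ℝ) (hγ : 0 < γ) (hγ1 : γ < 1) (hΓ : 1 < Γ)
    (hS : ∀ k < K, k ∈ S → Δk (k + 1) ≤ Γ * Δk k)
    (hU : ∀ k < K, k ∉ S → Δk (k + 1) ≤ γ * Δk k)
    (Δ : ℝ) (hΔ : 0 < Δ) (hΔ0 : Δ ≤ Δk 0) :
    ((((Finset.range (K + 1)).filter (fun k => k ∉ S ∧ γ⁻¹ * Δ ≤ Δk k)).card : ℝ)) ≤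
      Real.log Γ / Real.log (1 / γ) *
        (((Finset.range (K + 1)).filter (fun k => k ∈ S ∧ Γ⁻¹ * Δ ≤ Δk k)).card : ℝ) +
      Real.log (Δk 0 / Δ) / Real.log (1 / γ) := by
  classical
  set L := Real.log (1 / γ) with hLdef
  have hLγ : L = Real.log γ⁻¹ := by rw [hLdef, one_div]
  have hLneg : Real.log γ = -L := by
    rw [hLγ, Real.log_inv]; ring
  have hLpos : 0 < L := by
    rw [hLdef]
    apply Real.log_pos
    rw [lt_div_iff₀ hγ, one_mul]; exact hγ1
  have hlogΓ : 0 < Real.log Γ := Real.log_pos hΓ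
  set φ : ℕ → ℝ := fun k => max (Real.log (Δk k / Δ)) 0 with hφ
  have φnonneg : ∀ k, 0 ≤ φ k := fun k => le_max_right _ _
  have step : ∀ k < K, φ (k + 1) ≤ φ k
      + (if k ∈ S ∧ Γ⁻¹ * Δ ≤ Δk k then Real.log Γ else 0)
      - (if k ∉ S ∧ γ⁻¹ * Δ ≤ Δk k then L else 0) := by
    intro k hk
    have hk1 : 0 < Δk (k + 1) := hpos _ (by omega)
    have hk0 : 0 < Δk k := hpos _ (by omega)
    by_cases hkS : k ∈ S
    · simp only [hφ, hkS, not_true_eq_false, false_and, if_false, true_and, sub_zero]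
      by_cases hc : Γ⁻¹ * Δ ≤ Δk k
      · rw [if_pos hc]
        have h1 : Δk (k + 1) ≤ Γ * Δk k := hS k hk hkS
        have h2 : Real.log (Δk (k + 1) / Δ) ≤ Real.log (Δk k / Δ) + Real.log Γ := by
          have : Real.log (Δk (k + 1) / Δ) ≤ Real.log (Γ * Δk k / Δ) := by
            apply Real.log_le_log (div_pos hk1 hΔ)
            exact div_le_div_of_nonneg_right h1 hΔ.le
          rw [mul_div_assoc, Real.log_mul (ne_of_gt (lt_trans one_pos hΓ))
            (ne_of_gt (div_pos hk0 hΔ))] at this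
          linarith
        apply max_le
        · exact h2.trans (add_le_add_left (le_max_left _ _) _)
        · positivity
      · rw [if_neg hc]
        push_neg at hc
        have h1 : Δk (k + 1) < Δ := by
          calc Δk (k + 1) ≤ Γ * Δk k := hS k hk hkS
          _ < Γ * (Γ⁻¹ * Δ) := by
            apply mul_lt_mul_of_pos_left hc (lt_trans one_pos hΓ)
          _ = Δ := by field_simp
        have : Real.log (Δk (k + 1) / Δ) < 0 :=
          Real.log_neg (div_pos hk1 hΔ) ((div_lt_one hΔ).mpr h1)
        simp only [add_zero]
        exact max_le (this.le.trans (le_max_right _ _)) (le_max_right _ _)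
    · simp only [hφ, hkS, false_and, if_false, not_false_eq_true, true_and, add_zero]
      by_cases hc : γ⁻¹ * Δ ≤ Δk k
      · rw [if_pos hc]
        have h1 : Δk (k + 1) ≤ γ * Δk k := hU k hk hkS
        have hge : L ≤ Real.log (Δk k / Δ) := by
          rw [hLγ]
          apply Real.log_le_log (by positivity)
          rw [le_div_iff₀ hΔ]
          exact hc
        have h2 : Real.log (Δk (k + 1) / Δ) ≤ Real.log (Δk k / Δ) - L := by
          have : Real.log (Δk (k + 1) / Δ) ≤ Real.log (γ * Δk k / Δ) := by
            apply Real.log_le_log (div_pos hk1 hΔ)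
            exact div_le_div_of_nonneg_right h1 hΔ.le
          rw [mul_div_assoc, Real.log_mul (ne_of_gt hγ)
            (ne_of_gt (div_pos hk0 hΔ)), hLneg] at this
          linarith
        have hmax : max (Real.log (Δk k / Δ)) 0 = Real.log (Δk k / Δ) :=
          max_eq_left (le_trans hLpos.le hge)
        rw [hmax]
        exact max_le h2 (by linarith)
      · rw [if_neg hc]
        push_neg at hc
        have h1 : Δk (k + 1) < Δ := by
          calc Δk (k + 1) ≤ γ * Δk k := hU k hk hkS
          _ < γ * (γ⁻¹ * Δ) := mul_lt_mul_of_pos_left hc hγ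
          _ = Δ := by field_simp
        have : Real.log (Δk (k + 1) / Δ) < 0 :=
          Real.log_neg (div_pos hk1 hΔ) ((div_lt_one hΔ).mpr h1)
        simp only [sub_zero]
        exact max_le (this.le.trans (le_max_right _ _)) (le_max_right _ _)
  have main : ∀ n, n ≤ K →
      L * (((Finset.range n).filter (fun k => k ∉ S ∧ γ⁻¹ * Δ ≤ Δk k)).card : ℝ) + φ n ≤
      φ 0 + Real.log Γ *
        (((Finset.range n).filter (fun k => k ∈ S ∧ Γ⁻¹ * Δ ≤ Δk k)).card : ℝ) := by
    intro n
    induction n with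
    | zero => intro _; simp
    | succ n ih =>
      intro h
      have hn := ih (by omega)
      have hstep := step n (by omega)
      rw [Finset.range_add_one, Finset.filter_insert, Finset.filter_insert]
      by_cases hu : n ∉ S ∧ γ⁻¹ * Δ ≤ Δk n
      · rw [if_pos hu, if_neg (by simp [hu.1]), Finset.card_insert_of_notMem (by simp)]
        rw [if_pos hu] at hstep
        rw [if_neg (by simp [hu.1])] at hstep
        push_cast
        linarith
      · rw [if_neg hu]
        rw [if_neg hu] at hstep
        by_cases hs : n ∈ S ∧ Γ⁻¹ * Δ ≤ Δk n
        · rw [if_pos hs, Finset.card_insert_of_notMem (by simp)]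
          rw [if_pos hs] at hstep
          push_cast
          linarith
        · rw [if_neg hs]
          rw [if_neg hs] at hstep
          linarith
  have hφ0 : φ 0 = Real.log (Δk 0 / Δ) :=
    max_eq_left (Real.log_nonneg ((one_le_div hΔ).mpr hΔ0))
  rw [div_mul_eq_mul_div, ← add_div, le_div_iff₀ hLpos]
  have hmainK := main K le_rfl
  rw [Finset.range_add_one, Finset.filter_insert, Finset.filter_insert]
  have hcS : (((Finset.range K).filter (fun k => k ∈ S ∧ Γ⁻¹ * Δ ≤ Δk k)).card : ℝ) ≤
      ((if K ∈ S ∧ Γ⁻¹ * Δ ≤ Δk K then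
        insert K ((Finset.range K).filter (fun k => k ∈ S ∧ Γ⁻¹ * Δ ≤ Δk k))
        else (Finset.range K).filter (fun k => k ∈ S ∧ Γ⁻¹ * Δ ≤ Δk k)).card : ℝ) := by
    split
    · rw [Finset.card_insert_of_notMem (by simp)]; push_cast; linarith
    · exact le_rfl
  by_cases hu : K ∉ S ∧ γ⁻¹ * Δ ≤ Δk K
  · rw [if_pos hu, Finset.card_insert_of_notMem (by simp)]
    have hφK : L ≤ φ K := by
      refine le_trans ?_ (le_max_left _ _)
      rw [hLγ]
      apply Real.log_le_log (by positivity)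
      rw [le_div_iff₀ hΔ]
      exact hu.2
    push_cast
    nlinarith [φnonneg K, hcS]
  · rw [if_neg hu]
    nlinarith [φnonneg K, hcS]
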